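/- Let X be a compact Hausdorff space which has no non-empty perfect subsets (i.e. X contains no non-empty closed subset without isolated points). Then every uniform algebra on X is trivial: every closed subalgebra of C(X) that contains the constant functions and separates the points of X equals C(X). -/

import Mathlib

open Topology Set

section RudinAux

variable {X : Type*} [TopologicalSpace X] [CompactSpace X] [T2Space X]

theorem rudin_countable_range {X : Type*} [TopologicalSpace X] [CompactSpace X] [T2Space X]
    (hX : ¬ ∃ P : Set X, P.Nonempty ∧ Perfect P) (g : C(X, ℂ)) :
    (Set.range g).Countable := by
  by_contra hunc
  have hcl : IsClosed (Set.range g) := (isCompact_range g.continuous).isClosed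
  obtain ⟨P, Pperf, Pne, Psub⟩ :=
    exists_perfect_nonempty_of_isClosed_of_not_countable hcl hunc
  -- Zorn on closed subsets K of X with P ⊆ g '' K
  set S : Set (Set X) := {K | IsClosed K ∧ P ⊆ g '' K} with hS
  have huniv : (Set.univ : Set X) ∈ S := by
    refine ⟨isClosed_univ, ?_⟩
    rw [Set.image_univ]
    exact Psub
  have hchain : ∀ c ⊆ S, IsChain (· ⊆ ·) c → c.Nonempty → ∃ lb ∈ S, ∀ s ∈ c, lb ⊆ s := by
    intro c hcS hc hcne
    refine ⟨⋂₀ c, ⟨isClosed_sInter fun K hK => (hcS hK).1, ?_⟩, fun s hs => Set.sInter_subset_of_mem hs⟩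
    intro p hp
    haveI : Nonempty c := hcne.to_subtype
    have key : (⋂ K : c, ((K : Set X) ∩ g ⁻¹' {p})).Nonempty := by
      apply IsCompact.nonempty_iInter_of_directed_nonempty_isCompact_isClosed
      · rintro ⟨K, hK⟩ ⟨L, hL⟩
        rcases eq_or_ne K L with rfl | hne
        · exact ⟨⟨K, hK⟩, subset_rfl, subset_rfl⟩
        · rcases hc.total hK hL with h | h
          · exact ⟨⟨K, hK⟩, subset_rfl, Set.inter_subset_inter_left _ h⟩
          · exact ⟨⟨L, hL⟩, Set.inter_subset_inter_left _ h, subset_rfl⟩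
      · rintro ⟨K, hK⟩
        obtain ⟨x, hxK, hxp⟩ := (hcS hK).2 hp
        exact ⟨x, hxK, by simpa using hxp⟩
      · rintro ⟨K, hK⟩
        exact ((hcS hK).1.inter (isClosed_singleton.preimage g.continuous)).isCompact
      · rintro ⟨K, hK⟩
        exact (hcS hK).1.inter (isClosed_singleton.preimage g.continuous)
    obtain ⟨x, hx⟩ := key
    simp only [Set.mem_iInter] at hx
    refine ⟨x, ?_, ?_⟩
    · rw [Set.mem_sInter]
      intro K hK
      exact (hx ⟨K, hK⟩).1
    · obtain ⟨K0, hK0⟩ := hcne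
      simpa using (hx ⟨K0, hK0⟩).2
  obtain ⟨m, -, hmS, hmin⟩ := zorn_superset_nonempty S hchain Set.univ huniv
  -- m is a nonempty perfect subset of X
  have hmne : m.Nonempty := by
    obtain ⟨p, hp⟩ := Pne
    obtain ⟨x, hxm, -⟩ := hmS.2 hp
    exact ⟨x, hxm⟩
  refine hX ⟨m, hmne, hmS.1, ?_⟩
  intro x hx
  by_contra hacc
  rw [accPt_iff_nhds] at hacc
  push_neg at hacc
  obtain ⟨U, hU, hUs⟩ := hacc
  obtain ⟨V, hVU, hVopen, hxV⟩ := mem_nhds_iff.mp hU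
  -- m \ {x} is closed
  have hm' : m \ {x} = m ∩ Vᶜ := by
    ext y
    constructor
    · rintro ⟨hym, hyx⟩
      refine ⟨hym, fun hyV => hyx ?_⟩
      exact hUs y ⟨hVU hyV, hym⟩
    · rintro ⟨hym, hyV⟩
      exact ⟨hym, fun h => hyV (h ▸ hxV)⟩
  have hm'cl : IsClosed (m \ {x}) := hm' ▸ hmS.1.inter hVopen.isClosed_compl
  have hm'notS : m \ {x} ∉ S := by
    intro hmem
    have h2 := hmin hmem Set.diff_subset
    exact (h2 hx).2 rfl
  have hmem2 : ¬ (P ⊆ g '' (m \ {x})) := fun h => hm'notS ⟨hm'cl, h⟩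
  rw [Set.not_subset] at hmem2
  obtain ⟨p, hpP, hpn⟩ := hmem2
  have hgxp : g x = p := by
    obtain ⟨z, hzm, hzp⟩ := hmS.2 hpP
    rcases eq_or_ne z x with rfl | hzx
    · exact hzp
    · exact absurd ⟨z, ⟨hzm, hzx⟩, hzp⟩ hpn
  -- P \ {p} ⊆ g '' (m \ {x}), whose closure contains p
  have hPsub : P \ {p} ⊆ g '' (m \ {x}) := by
    rintro q ⟨hqP, hqp⟩
    obtain ⟨w, hwm, hwq⟩ := hmS.2 hqP
    rcases eq_or_ne w x with rfl | hwx
    · exact absurd (hwq ▸ hgxp ▸ rfl : q = p) hqp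
    · exact ⟨w, ⟨hwm, hwx⟩, hwq⟩
  have himcl : IsClosed (g '' (m \ {x})) :=
    (hm'cl.isCompact.image g.continuous).isClosed
  have hpcl : p ∈ closure (P \ {p}) := by
    have := Pperf.acc p hpP
    rw [accPt_principal_iff_clusterPt] at this
    exact mem_closure_iff_clusterPt.mpr this
  have : p ∈ g '' (m \ {x}) := himcl.closure_subset ((closure_mono hPsub) hpcl)
  exact hpn this

/-- approximation criterion for membership in a closed subalgebra -/
theorem rudin_approx_mem {A : Subalgebra ℂ C(X, ℂ)} (hA : IsClosed (A : Set C(X, ℂ)))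
    {g : C(X, ℂ)} (h : ∀ ε : ℝ, 0 < ε → ∃ f ∈ A, ‖f - g‖ ≤ ε) : g ∈ A := by
  have : g ∈ closure (A : Set C(X, ℂ)) := by
    rw [Metric.mem_closure_iff]
    intro ε hε
    obtain ⟨f, hf, hle⟩ := h (ε / 2) (by linarith)
    refine ⟨f, hf, ?_⟩
    rw [dist_comm, dist_eq_norm]
    calc ‖f - g‖ ≤ ε / 2 := hle
    _ < ε := by linarith
  rwa [hA.closure_eq] at this

/-- geometric series: if `u ∈ A`, `‖u‖ < 1` and `v` is the pointwise inverse of `1 - u`,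
then `v ∈ A`. -/
theorem rudin_geom_mem {A : Subalgebra ℂ C(X, ℂ)} (hA : IsClosed (A : Set C(X, ℂ)))
    {u v : C(X, ℂ)} (hu : u ∈ A) (hnorm : ‖u‖ < 1)
    (hv : ∀ x, (1 - u x) * v x = 1) : v ∈ A := by
  apply rudin_approx_mem hA
  intro ε hε
  -- choose n with ‖v‖ * ‖u‖^n ≤ ε
  have h1 : Filter.Tendsto (fun n : ℕ => ‖v‖ * ‖u‖ ^ n) Filter.atTop (nhds 0) := by
    rw [show (0:ℝ) = ‖v‖ * 0 by ring]
    exact (tendsto_pow_atTop_nhds_zero_of_lt_one (norm_nonneg u) hnorm).const_mul _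
  obtain ⟨n, hn'⟩ := (h1.eventually (gt_mem_nhds hε)).exists
  have hn : ‖v‖ * ‖u‖ ^ n ≤ ε := le_of_lt hn'
  refine ⟨∑ k ∈ Finset.range n, u ^ k, Subalgebra.sum_mem A fun k _ => pow_mem hu k, ?_⟩
  have key : ∀ x : X, (∑ k ∈ Finset.range n, u ^ k) x - v x = -(v x * u x ^ n) := by
    intro x
    have hne : (1 - u x) ≠ 0 := by
      intro hzero
      have := hv x
      rw [hzero, zero_mul] at this
      exact zero_ne_one this
    have hgs := geom_sum_mul (u x) n
    have hsum : (∑ k ∈ Finset.range n, u ^ k) x = ∑ k ∈ Finset.range n, (u x) ^ k := by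
      simp
    rw [hsum]
    refine mul_left_cancel₀ hne ?_
    linear_combination (-1 : ℂ) * hgs + (u x ^ n - 1) * hv x
  calc ‖(∑ k ∈ Finset.range n, u ^ k) - v‖ ≤ ‖v‖ * ‖u‖ ^ n := by
        apply (ContinuousMap.norm_le _ (by positivity)).mpr
        intro x
        rw [ContinuousMap.sub_apply, key x, norm_neg, norm_mul, norm_pow]
        exact mul_le_mul (ContinuousMap.norm_coe_le_norm v x)
          (pow_le_pow_left₀ (norm_nonneg _) (ContinuousMap.norm_coe_le_norm u x) n)
          (by positivity) (norm_nonneg _)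
  _ ≤ ε := hn

/-- resolvent membership: if `h ∈ A` and `μ` is not in the range of `h`,
then the pointwise inverse of `h - μ` is in `A`. -/
theorem rudin_resolvent_mem (hX : ¬ ∃ P : Set X, P.Nonempty ∧ Perfect P)
    {A : Subalgebra ℂ C(X, ℂ)} (hA : IsClosed (A : Set C(X, ℂ)))
    {h : C(X, ℂ)} (hh : h ∈ A) {μ : ℂ} (hμ : ∀ x, h x ≠ μ) :
    ∃ r ∈ A, ∀ x, (h x - μ) * r x = 1 := by
  cases isEmpty_or_nonempty X with
  | inl hempty => exact ⟨0, zero_mem A, fun x => (IsEmpty.false x).elim⟩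
  | inr hne =>
  -- The set of μ' for which the conclusion holds
  set T : Set ℂ := {ν : ℂ | (∀ x, h x ≠ ν) ∧ ∃ r ∈ A, ∀ x, (h x - ν) * r x = 1} with hT
  -- Step A: local extension
  have stepA : ∀ ν ∈ T, ∀ r ∈ A, (∀ x, (h x - ν) * r x = 1) →
      ∀ ν' : ℂ, ‖ν' - ν‖ * ‖r‖ < 1 → ν' ∈ T := by
    intro ν hν r hr hrinv ν' hlt
    have hbound : ∀ x : X, ‖ν' - ν‖ * ‖r x‖ < 1 := fun x =>
      lt_of_le_of_lt (by
        have := ContinuousMap.norm_coe_le_norm r x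
        exact mul_le_mul_of_nonneg_left this (norm_nonneg _)) hlt
    have hΩ : ∀ x, h x ≠ ν' := by
      intro x hx
      have h1 : (h x - ν) * r x = 1 := hrinv x
      have h2 : h x - ν = ν' - ν := by rw [hx]
      rw [h2] at h1
      have : ‖(ν' - ν) * r x‖ = 1 := by rw [h1, norm_one]
      rw [norm_mul] at this
      exact absurd this (ne_of_lt (hbound x))
    set u : C(X, ℂ) := (ν' - ν) • r with hu
    have humem : u ∈ A := Subalgebra.smul_mem A hr _
    have hunorm : ‖u‖ < 1 := by rwa [hu, norm_smul]
    -- v = pointwise inverse of (1 - u)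
    have hune : ∀ x, (1 : ℂ) - u x ≠ 0 := by
      intro x hx
      have h1 : ‖u x‖ < 1 := lt_of_le_of_lt (ContinuousMap.norm_coe_le_norm u x) hunorm
      have : u x = 1 := by linear_combination -hx
      rw [this, norm_one] at h1
      exact lt_irrefl _ h1
    set v : C(X, ℂ) := ⟨fun x => (1 - u x)⁻¹, by
      apply Continuous.inv₀
      · exact continuous_const.sub u.continuous
      · exact fun x => hune x⟩ with hv
    have hvmem : v ∈ A := by
      apply rudin_geom_mem hA humem hunorm
      intro x
      exact mul_inv_cancel₀ (hune x)
    refine ⟨hΩ, r * v, mul_mem hr hvmem, ?_⟩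
    intro x
    have e1 : h x - ν' = (h x - ν) * (1 - u x) := by
      have : u x = (ν' - ν) * r x := by simp [hu]
      rw [this]
      have h1 := hrinv x
      linear_combination (ν' - ν) * h1
    rw [ContinuousMap.mul_apply, e1]
    have hvx : v x = (1 - u x)⁻¹ := rfl
    calc (h x - ν) * (1 - u x) * (r x * v x)
        = ((h x - ν) * r x) * ((1 - u x) * v x) := by ring
    _ = 1 := by rw [hrinv x, hvx, mul_inv_cancel₀ (hune x), mul_one]
  -- Step D : big ν are in T
  have stepD : ∀ ν : ℂ, ‖h‖ < ‖ν‖ → ν ∈ T := by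
    intro ν hbig
    have hν0 : ν ≠ 0 := by
      intro h0; rw [h0, norm_zero] at hbig; exact absurd (norm_nonneg h) (not_le.mpr hbig)
    have hΩ : ∀ x, h x ≠ ν := by
      intro x hx
      have := ContinuousMap.norm_coe_le_norm h x
      rw [hx] at this
      exact absurd this (not_le.mpr hbig)
    set u : C(X, ℂ) := ν⁻¹ • h with hu
    have humem : u ∈ A := Subalgebra.smul_mem A hh _
    have hunorm : ‖u‖ < 1 := by
      rw [hu, norm_smul, norm_inv]
      rw [inv_mul_lt_iff₀ (lt_of_le_of_lt (norm_nonneg h) hbig), mul_one]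
      exact hbig
    have hune : ∀ x, (1 : ℂ) - u x ≠ 0 := by
      intro x hx
      have h1 : ‖u x‖ < 1 := lt_of_le_of_lt (ContinuousMap.norm_coe_le_norm u x) hunorm
      have : u x = 1 := by linear_combination -hx
      rw [this, norm_one] at h1
      exact lt_irrefl _ h1
    set v : C(X, ℂ) := ⟨fun x => (1 - u x)⁻¹, by
      apply Continuous.inv₀
      · exact continuous_const.sub u.continuous
      · exact fun x => hune x⟩ with hv
    have hvmem : v ∈ A := by
      apply rudin_geom_mem hA humem hunorm
      intro x
      exact mul_inv_cancel₀ (hune x)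
    refine ⟨hΩ, (-ν⁻¹) • v, Subalgebra.smul_mem A hvmem _, ?_⟩
    intro x
    have hvx : (1 - u x) * v x = 1 := mul_inv_cancel₀ (hune x)
    have hux : u x = ν⁻¹ * h x := by simp [hu]
    rw [ContinuousMap.smul_apply]
    have : (h x - ν) * (-ν⁻¹ • v x) = (1 - u x) * v x := by
      rw [hux, smul_eq_mul]
      field_simp
      ring
    rw [this, hvx]
  -- min distance for ν outside range h
  have mindist : ∀ ν : ℂ, (∀ x, h x ≠ ν) → ∃ d : ℝ, 0 < d ∧ ∀ x, d ≤ ‖h x - ν‖ := by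
    intro ν hν
    obtain ⟨x0, -, hx0⟩ := IsCompact.exists_isMinOn isCompact_univ univ_nonempty
      (Continuous.continuousOn ((h.continuous.sub continuous_const).norm))
    refine ⟨‖h x0 - ν‖, ?_, fun x => hx0 (mem_univ x)⟩
    rw [norm_pos_iff]
    exact sub_ne_zero.mpr (hν x0)
  -- Step C: if ν ∉ range h and some ν' ∈ T is within d/2 then ν ∈ T
  have stepC : ∀ ν : ℂ, (∀ x, h x ≠ ν) → ∀ d : ℝ, 0 < d → (∀ x, d ≤ ‖h x - ν‖) →
      ∀ ν' ∈ T, ‖ν - ν'‖ < d / 2 → ν ∈ T := by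
    intro ν hν d hd hdle ν' hν' hclose
    have hν'mem := hν'
    obtain ⟨-, r, hr, hrinv⟩ := hν'
    -- pointwise bound on r: ‖r x‖ ≤ 2/d
    have hrbound : ‖r‖ ≤ 2 / d := by
      apply (ContinuousMap.norm_le _ (by positivity)).mpr
      intro x
      have h1 : (h x - ν') * r x = 1 := hrinv x
      have h2 : ‖h x - ν'‖ * ‖r x‖ = 1 := by rw [← norm_mul, h1, norm_one]
      have h3 : d / 2 ≤ ‖h x - ν'‖ := by
        have t1 : ‖h x - ν‖ ≤ ‖h x - ν'‖ + ‖ν' - ν‖ := by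
          calc ‖h x - ν‖ = ‖(h x - ν') + (ν' - ν)‖ := by congr 1; ring
          _ ≤ _ := norm_add_le _ _
        have t2 : ‖ν' - ν‖ = ‖ν - ν'‖ := norm_sub_rev _ _
        have := hdle x
        linarith
      have h5 : (0:ℝ) < ‖h x - ν'‖ := lt_of_lt_of_le (by positivity) h3
      have h4 : ‖r x‖ = 1 / ‖h x - ν'‖ := by
        rw [eq_div_iff (ne_of_gt h5), mul_comm]
        exact h2
      rw [h4]
      calc 1 / ‖h x - ν'‖ ≤ 1 / (d/2) := by
            apply one_div_le_one_div_of_le (by positivity) h3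
      _ = 2 / d := by rw [one_div_div]
    have : ‖ν - ν'‖ * ‖r‖ < 1 := by
      have h2d : (0:ℝ) < 2 / d := by positivity
      calc ‖ν - ν'‖ * ‖r‖ ≤ ‖ν - ν'‖ * (2 / d) := by
            apply mul_le_mul_of_nonneg_left hrbound (norm_nonneg _)
      _ < (d / 2) * (2 / d) := by
            apply mul_lt_mul_of_pos_right hclose h2d
      _ = 1 := by field_simp
    exact stepA ν' hν'mem r hr hrinv ν this
  -- openness of T
  have hTopen : IsOpen T := by
    rw [Metric.isOpen_iff]
    intro ν hν
    have hνmem := hν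
    obtain ⟨hΩ, r, hr, hrinv⟩ := hν
    have hrpos : 0 < ‖r‖ := by
      obtain ⟨x⟩ := hne
      have h1 := hrinv x
      have : r x ≠ 0 := by
        intro h0
        rw [h0, mul_zero] at h1
        exact zero_ne_one h1
      calc (0:ℝ) < ‖r x‖ := norm_pos_iff.mpr this
      _ ≤ ‖r‖ := ContinuousMap.norm_coe_le_norm r x
    refine ⟨1 / ‖r‖, by positivity, ?_⟩
    intro ν'' hball
    rw [Metric.mem_ball, dist_eq_norm] at hball
    have : ‖ν'' - ν‖ * ‖r‖ < 1 := by
      rw [← lt_div_iff₀ hrpos]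
      exact hball
    exact stepA ν hνmem r hr hrinv ν'' this
  -- the complementary relatively-open set
  set V : Set ℂ := {ν : ℂ | (∀ x, h x ≠ ν) ∧ ν ∉ T} with hV
  have hVopen : IsOpen V := by
    rw [Metric.isOpen_iff]
    intro ν hν
    obtain ⟨hΩ, hνT⟩ := hν
    obtain ⟨d, hd, hdle⟩ := mindist ν hΩ
    refine ⟨d / 2, by positivity, ?_⟩
    intro ν'' hball
    rw [Metric.mem_ball, dist_eq_norm] at hball
    have hΩ'' : ∀ x, h x ≠ ν'' := by
      intro x hx
      have h1 := hdle x
      rw [hx] at h1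
      have : ‖ν'' - ν‖ < d := by linarith
      exact absurd h1 (not_le.mpr this)
    refine ⟨hΩ'', fun hT'' => hνT ?_⟩
    exact stepC ν hΩ d hd hdle ν'' hT'' (by rwa [norm_sub_rev] at hball)
  -- connectivity of the complement of the range
  suffices hμT : μ ∈ T by exact hμT.2
  by_contra hcon
  have hcount := rudin_countable_range hX h
  have hpath : IsPathConnected (Set.range h)ᶜ := by
    apply hcount.isPathConnected_compl_of_one_lt_rank
    rw [Complex.rank_real_complex]
    exact Cardinal.one_lt_two
  have hpre : IsPreconnected (Set.range h)ᶜ := hpath.isConnected.isPreconnected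
  have hsub : (Set.range h)ᶜ ⊆ T ∪ V := by
    intro ν hν
    have hΩ : ∀ x, h x ≠ ν := fun x hx => hν ⟨x, hx⟩
    by_cases hT' : ν ∈ T
    · exact Or.inl hT'
    · exact Or.inr ⟨hΩ, hT'⟩
  have hTne : ((Set.range h)ᶜ ∩ T).Nonempty := by
    set ν0 : ℂ := ((‖h‖ + 1 : ℝ) : ℂ) with hν0
    have hbig : ‖h‖ < ‖ν0‖ := by
      rw [hν0, Complex.norm_real, Real.norm_eq_abs, abs_of_pos (by positivity)]
      linarith
    have hbigT := stepD ν0 hbig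
    exact ⟨ν0, fun hmem => (hbigT.1 hmem.choose hmem.choose_spec), hbigT⟩
  have hVne : ((Set.range h)ᶜ ∩ V).Nonempty :=
    ⟨μ, fun hmem => (hμ hmem.choose hmem.choose_spec), hμ, hcon⟩
  obtain ⟨ν, hν1, hν2, hν3⟩ := hpre T V hTopen hVopen hsub hTne hVne
  exact hν3.2 hν2

/-- If `φ ∈ A` has modulus uniformly away from 1 on both sides, the corresponding
indicator function is in `A`. -/
theorem rudin_idem_mem (hX : ¬ ∃ P : Set X, P.Nonempty ∧ Perfect P)
    {A : Subalgebra ℂ C(X, ℂ)} (hA : IsClosed (A : Set C(X, ℂ)))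
    {φ : C(X, ℂ)} (hφ : φ ∈ A) {e : C(X, ℂ)} {δ : ℝ} (hδ : 0 < δ) (hδ1 : δ < 1)
    (hcase : ∀ x, (e x = 1 ∧ 1 + δ ≤ ‖φ x‖) ∨ (e x = 0 ∧ ‖φ x‖ ≤ 1 - δ)) :
    e ∈ A := by
  apply rudin_approx_mem hA
  intro ε hε
  -- choose a suitable power n
  have h1 : Filter.Tendsto (fun n : ℕ => (1 - δ) ^ n) Filter.atTop (nhds 0) :=
    tendsto_pow_atTop_nhds_zero_of_lt_one (by linarith) (by linarith)
  have h2 : Filter.Tendsto (fun n : ℕ => (1 + δ) ^ n) Filter.atTop Filter.atTop :=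
    tendsto_pow_atTop_atTop_of_one_lt (by linarith)
  have h3 : ∀ᶠ n : ℕ in Filter.atTop,
      (1 - δ) ^ n < min (1/2) (ε/2) ∧ 1 + 1/ε ≤ (1 + δ) ^ n := by
    filter_upwards [h1.eventually (gt_mem_nhds (show (0:ℝ) < min (1/2) (ε/2) by positivity)),
      h2.eventually_ge_atTop (1 + 1/ε)] with n hn1 hn2
    exact ⟨hn1, hn2⟩
  obtain ⟨n, hn1, hn2⟩ := h3.exists
  have hq2 : (1 - δ) ^ n ≤ 1/2 := le_of_lt (lt_of_lt_of_le hn1 (min_le_left _ _))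
  have hqe : (1 - δ) ^ n ≤ ε/2 := le_of_lt (lt_of_lt_of_le hn1 (min_le_right _ _))
  have hq0 : (0:ℝ) ≤ (1 - δ) ^ n := pow_nonneg (by linarith) n
  -- resolvent of φ^n at -1
  have hμn : ∀ x, (φ ^ n) x ≠ (-1 : ℂ) := by
    intro x hx
    have hpow : (φ ^ n) x = φ x ^ n := by simp
    have : ‖(φ ^ n) x‖ = ‖φ x‖ ^ n := by rw [hpow, norm_pow]
    rw [hx] at this
    rw [norm_neg, norm_one] at this
    rcases hcase x with ⟨-, hge⟩ | ⟨-, hle⟩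
    · have t2 : (1+δ)^n ≤ ‖φ x‖ ^ n := pow_le_pow_left₀ (by linarith) hge n
      have t3 : (1:ℝ) + 1/ε ≤ 1 := by
        calc (1:ℝ) + 1/ε ≤ (1+δ)^n := hn2
        _ ≤ ‖φ x‖ ^ n := t2
        _ = 1 := this.symm
      have : (0:ℝ) < 1/ε := by positivity
      linarith
    · have hh : ‖φ x‖ ^ n ≤ (1 - δ) ^ n :=
        pow_le_pow_left₀ (norm_nonneg _) hle n
      rw [← this] at hh
      linarith
  obtain ⟨r, hr, hrinv⟩ := rudin_resolvent_mem hX hA (pow_mem hφ n) hμn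
  refine ⟨φ ^ n * r, mul_mem (pow_mem hφ n) hr, ?_⟩
  apply (ContinuousMap.norm_le _ (le_of_lt hε)).mpr
  intro x
  have hpow : (φ ^ n) x = φ x ^ n := by simp
  have hiden : (φ x ^ n + 1) * r x = 1 := by
    have := hrinv x
    rw [hpow] at this
    linear_combination this
  have hne0 : (φ x ^ n + 1 : ℂ) ≠ 0 := by
    intro h0
    rw [h0, zero_mul] at hiden
    exact zero_ne_one hiden
  have hrx : r x = (φ x ^ n + 1)⁻¹ := by
    field_simp at hiden ⊢
    linear_combination hiden
  rcases hcase x with ⟨he1, hge⟩ | ⟨he0, hle⟩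
  · -- e x = 1 : |F x - 1| = 1/|φ^n + 1| ≤ 1/((1+δ)^n - 1) ≤ ε
    have hlow : 1/ε ≤ ‖φ x ^ n + 1‖ := by
      have t1 : ‖φ x ^ n‖ - 1 ≤ ‖φ x ^ n + 1‖ := by
        have := norm_add_le (φ x ^ n + 1) (-1 : ℂ)
        simp only [norm_neg, norm_one] at this
        have heq : φ x ^ n + 1 + -1 = φ x ^ n := by ring
        rw [heq] at this
        linarith
      have t2 : (1 + δ) ^ n ≤ ‖φ x ^ n‖ := by
        rw [norm_pow]
        exact pow_le_pow_left₀ (by linarith) hge n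
      linarith
    have hεinv : (0:ℝ) < 1/ε := by positivity
    have hnormpos : (0:ℝ) < ‖φ x ^ n + 1‖ := lt_of_lt_of_le hεinv hlow
    rw [ContinuousMap.sub_apply, ContinuousMap.mul_apply, hpow, he1, hrx]
    have : φ x ^ n * (φ x ^ n + 1)⁻¹ - 1 = -(φ x ^ n + 1)⁻¹ := by
      field_simp
      ring
    rw [this, norm_neg, norm_inv]
    rw [inv_le_comm₀ hnormpos hε]
    rw [one_div] at hlow
    exact hlow
  · -- e x = 0
    have hupp : ‖φ x ^ n‖ ≤ (1 - δ) ^ n := by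
      rw [norm_pow]
      exact pow_le_pow_left₀ (norm_nonneg _) hle n
    have hlow : (1:ℝ)/2 ≤ ‖φ x ^ n + 1‖ := by
      have t1 : 1 - ‖φ x ^ n‖ ≤ ‖φ x ^ n + 1‖ := by
        have := norm_add_le (φ x ^ n + 1) (-(φ x ^ n) : ℂ)
        simp only [norm_neg] at this
        have heq : φ x ^ n + 1 + -(φ x ^ n) = 1 := by ring
        rw [heq, norm_one] at this
        linarith
      linarith
    rw [ContinuousMap.sub_apply, ContinuousMap.mul_apply, hpow, he0, sub_zero, hrx,
      norm_mul, norm_inv]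
    calc ‖φ x ^ n‖ * ‖φ x ^ n + 1‖⁻¹ ≤ (ε/2) * 2 := by
          apply mul_le_mul (le_trans hupp hqe) ?_ (by positivity) (by positivity)
          rw [inv_le_comm₀ (by linarith) (by norm_num)]
          linarith
    _ = ε := by ring

/-- Countable sets don't cover intervals. -/
theorem rudin_exists_in_Ioo {a b : ℝ} (hab : a < b) {N : Set ℝ} (hN : N.Countable) :
    ∃ t, t ∈ Set.Ioo a b ∧ t ∉ N := by
  by_contra hcon
  push_neg at hcon
  have hsub : Set.Ioo a b ⊆ N := fun t ht => hcon t ht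
  have : (Set.Ioo a b).Countable := hN.mono hsub
  have h0 := this.measure_zero (μ := MeasureTheory.volume)
  rw [Real.volume_Ioo] at h0
  have : b - a ≤ 0 := by
    by_contra hba
    push_neg at hba
    rw [ENNReal.ofReal_eq_zero] at h0
    linarith
  linarith

/-- The key separation lemma: every pair of distinct points is separated by a
real-valued idempotent in `A`. -/
theorem rudin_sep (hX : ¬ ∃ P : Set X, P.Nonempty ∧ Perfect P)
    {A : Subalgebra ℂ C(X, ℂ)} (hA : IsClosed (A : Set C(X, ℂ)))
    {x y : X} (hxy : x ≠ y) {f : C(X, ℂ)} (hf : f ∈ A) (hfxy : f x ≠ f y) :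
    ∃ e : C(X, ℂ), e ∈ A ∧ star e = e ∧ e x = 1 ∧ e y = 0 := by
  classical
  set D : ℝ := ‖f x - f y‖ with hD
  have hDpos : 0 < D := by rw [hD, norm_pos_iff, sub_ne_zero]; exact hfxy
  -- pick μ0 on the segment from f x towards f y, off the range of f
  have hcount := rudin_countable_range hX f
  set θ : ℝ → ℂ := fun s => f x + (s : ℂ) * (f y - f x) with hθ
  have hθinj : Function.Injective θ := by
    intro s s' hss
    rw [hθ] at hss
    simp only [add_right_inj] at hss
    have h2 : (s : ℂ) = (s' : ℂ) := by
      have hne : f y - f x ≠ 0 := sub_ne_zero.mpr (Ne.symm hfxy)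
      exact mul_right_cancel₀ hne hss
    exact_mod_cast h2
  obtain ⟨s, hs, hsnotin⟩ := rudin_exists_in_Ioo (show (0:ℝ) < 1/10 by norm_num)
    (hcount.preimage hθinj)
  set μ0 : ℂ := θ s with hμ0
  have hμ0notin : ∀ x', f x' ≠ μ0 := by
    intro x' hx'
    exact hsnotin ⟨x', hx'⟩
  have hs1 : 0 < s := hs.1
  have hs2 : s < 1/10 := hs.2
  have h1s : (0:ℝ) < 1 - s := by linarith
  -- distances
  have hdx : ‖f x - μ0‖ = s * D := by
    have e1 : f x - μ0 = -((s:ℂ) * (f y - f x)) := by rw [hμ0, hθ]; ring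
    rw [e1, norm_neg, norm_mul, Complex.norm_real, Real.norm_eq_abs, abs_of_pos hs1,
      norm_sub_rev]
  have hdy : ‖f y - μ0‖ = (1 - s) * D := by
    have e1 : f y - μ0 = ((1:ℂ) - (s:ℂ)) * (f y - f x) := by rw [hμ0, hθ]; ring
    rw [e1, norm_mul]
    congr 1
    · have e2 : ((1:ℂ) - (s:ℂ)) = ((1 - s : ℝ) : ℂ) := by push_cast; ring
      rw [e2, Complex.norm_real, Real.norm_eq_abs, abs_of_pos h1s]
    · rw [norm_sub_rev]
  -- resolvent ψ
  obtain ⟨ψ, hψA, hψinv⟩ := rudin_resolvent_mem hX hA hf hμ0notin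
  have hψx : ‖ψ x‖ = (s * D)⁻¹ := by
    have h1 := hψinv x
    have h2 : ‖f x - μ0‖ * ‖ψ x‖ = 1 := by rw [← norm_mul, h1, norm_one]
    rw [hdx] at h2
    exact eq_inv_of_mul_eq_one_left (by rw [mul_comm]; exact h2)
  have hψy : ‖ψ y‖ = ((1 - s) * D)⁻¹ := by
    have h1 := hψinv y
    have h2 : ‖f y - μ0‖ * ‖ψ y‖ = 1 := by rw [← norm_mul, h1, norm_one]
    rw [hdy] at h2
    exact eq_inv_of_mul_eq_one_left (by rw [mul_comm]; exact h2)
  -- ‖ψ y‖ < 10/(9D) < 10/D < ‖ψ x‖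
  have hψxval : 10/D < ‖ψ x‖ := by
    rw [hψx]
    have h1 : s * D < D/10 := by nlinarith
    have h3 := one_div_lt_one_div_of_lt (by positivity : (0:ℝ) < s * D) h1
    rw [one_div_div, one_div] at h3
    exact h3
  have hψyval : ‖ψ y‖ < 10/(9*D) := by
    rw [hψy]
    have h1 : (9*D)/10 < (1-s)*D := by nlinarith
    have h3 := one_div_lt_one_div_of_lt (by positivity : (0:ℝ) < (9*D)/10) h1
    rw [one_div_div, one_div] at h3
    exact h3
  -- choose threshold t avoiding the countable set of moduli of ψ
  set N : Set ℝ := (fun z : ℂ => ‖z‖) '' (Set.range ψ) with hN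
  have hNcount : N.Countable := (rudin_countable_range hX ψ).image _
  have hNcompact : IsCompact N := (isCompact_range ψ.continuous).image continuous_norm
  have h9 : 10/(9*D) < 10/D := by
    apply div_lt_div_of_pos_left (by norm_num) (by positivity)
    linarith
  obtain ⟨t, ht, htN⟩ := rudin_exists_in_Ioo h9 hNcount
  have htpos : 0 < t := lt_trans (by positivity) ht.1
  -- a gap around t
  obtain ⟨ε, hεpos, hεball⟩ := Metric.isOpen_iff.mp hNcompact.isClosed.isOpen_compl t htN
  set ε' : ℝ := min ε (t/2) with hε'
  have hε'pos : 0 < ε' := lt_min hεpos (by positivity)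
  have hε't : ε' < t := lt_of_le_of_lt (min_le_right _ _) (by linarith)
  have hgap : ∀ x' : X, (t + ε' ≤ ‖ψ x'‖) ∨ (‖ψ x'‖ ≤ t - ε') := by
    intro x'
    have hmem : ‖ψ x'‖ ∈ N := ⟨ψ x', ⟨x', rfl⟩, rfl⟩
    have hdist : ε ≤ |‖ψ x'‖ - t| := by
      by_contra hcon
      push_neg at hcon
      have : ‖ψ x'‖ ∈ Metric.ball t ε := by
        rw [Metric.mem_ball, Real.dist_eq]
        exact hcon
      exact (hεball this) hmem
    have hdist' : ε' ≤ |‖ψ x'‖ - t| := le_trans (min_le_left _ _) hdist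
    rcases le_or_gt t (‖ψ x'‖) with hcase | hcase
    · left
      rw [abs_of_nonneg (by linarith)] at hdist'
      linarith
    · right
      rw [abs_of_neg (by linarith)] at hdist'
      linarith
  have e3 : (1 + ε'/t) * t = t + ε' := by field_simp
  have e4 : (1 - ε'/t) * t = t - ε' := by field_simp
  -- the indicator function e
  have hWopen : IsOpen {x' : X | t < ‖ψ x'‖} :=
    isOpen_lt continuous_const ψ.continuous.norm
  have hWclosed : IsClosed {x' : X | t < ‖ψ x'‖} := by
    have hWeq : {x' : X | t < ‖ψ x'‖} = {x' : X | t + ε' ≤ ‖ψ x'‖} := by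
      ext x'
      simp only [Set.mem_setOf_eq]
      constructor
      · intro hlt
        rcases hgap x' with hc | hc
        · exact hc
        · linarith
      · intro hge
        linarith
    rw [hWeq]
    exact isClosed_le continuous_const ψ.continuous.norm
  have hfront : frontier {x' : X | t < ‖ψ x'‖} = ∅ := by
    rw [frontier, hWclosed.closure_eq, hWopen.interior_eq, Set.diff_self]
  set e : C(X, ℂ) := ⟨fun x' => if t < ‖ψ x'‖ then 1 else 0, by
    apply Continuous.if
    · intro a ha
      rw [show frontier {x' : X | t < ‖ψ x'‖} = ∅ from hfront] at ha
      exact absurd ha (Set.notMem_empty a)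
    · exact continuous_const
    · exact continuous_const⟩ with he
  -- e ∈ A via the idempotent lemma applied to φ = t⁻¹ • ψ
  have heA : e ∈ A := by
    apply rudin_idem_mem hX hA (Subalgebra.smul_mem A hψA ((t:ℂ)⁻¹))
      (show 0 < ε'/t by positivity)
      (show ε'/t < 1 by rw [div_lt_one htpos]; exact hε't)
    intro x'
    have hφnorm : ‖((t:ℂ)⁻¹ • ψ) x'‖ = ‖ψ x'‖ / t := by
      rw [ContinuousMap.smul_apply, norm_smul, norm_inv, Complex.norm_real,
        Real.norm_eq_abs, abs_of_pos htpos, inv_mul_eq_div]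
    rcases hgap x' with hc | hc
    · left
      constructor
      · rw [he]
        simp only [ContinuousMap.coe_mk]
        rw [if_pos (by linarith : t < ‖ψ x'‖)]
      · rw [hφnorm, le_div_iff₀ htpos, e3]
        exact hc
    · right
      constructor
      · rw [he]
        simp only [ContinuousMap.coe_mk]
        rw [if_neg (by intro hlt; linarith : ¬ t < ‖ψ x'‖)]
      · rw [hφnorm, div_le_iff₀ htpos, e4]
        exact hc
  refine ⟨e, heA, ?_, ?_, ?_⟩
  · ext x'
    rw [ContinuousMap.star_apply, he]
    simp only [ContinuousMap.coe_mk]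
    split_ifs
    · simp
    · simp
  · rw [he]
    simp only [ContinuousMap.coe_mk]
    rw [if_pos]
    calc t < 10/D := ht.2
    _ < ‖ψ x‖ := hψxval
  · rw [he]
    simp only [ContinuousMap.coe_mk]
    rw [if_neg]
    push_neg
    exact le_of_lt (lt_of_lt_of_le hψyval (le_of_lt ht.1))

end RudinAux

/-- **Rudin's theorem.** If a compact Hausdorff space `X` has no non-empty perfect
subsets, then every uniform algebra on `X` (i.e. every closed subalgebra of `C(X)`
containing the constants and separating points) is all of `C(X)`. -/
theorem stmt_18 {X : Type*} [TopologicalSpace X] [CompactSpace X] [T2Space X]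
    (hX : ¬ ∃ P : Set X, P.Nonempty ∧ Perfect P)
    (A : Subalgebra ℂ C(X, ℂ)) (hA : IsClosed (A : Set C(X, ℂ)))
    (hsep : ∀ x y : X, x ≠ y → ∃ f ∈ A, f x ≠ f y) :
    A = ⊤ := by
  -- the star-closed part of A
  set SA : StarSubalgebra ℂ C(X, ℂ) :=
    { carrier := {f | f ∈ A ∧ star f ∈ A}
      mul_mem' := fun hf hg => ⟨mul_mem hf.1 hg.1, by
        rw [star_mul]; exact mul_mem hg.2 hf.2⟩
      add_mem' := fun hf hg => ⟨add_mem hf.1 hg.1, by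
        rw [star_add]; exact add_mem hf.2 hg.2⟩
      one_mem' := ⟨one_mem A, by rw [star_one]; exact one_mem A⟩
      zero_mem' := ⟨zero_mem A, by rw [star_zero]; exact zero_mem A⟩
      algebraMap_mem' := fun c => ⟨A.algebraMap_mem c, by
        rw [← algebraMap_star_comm]; exact A.algebraMap_mem _⟩
      star_mem' := fun hf => ⟨hf.2, by rw [star_star]; exact hf.1⟩ } with hSA
  have hSAsep : SA.SeparatesPoints := by
    intro x y hxy
    obtain ⟨f, hf, hfxy⟩ := hsep x y hxy
    obtain ⟨e, heA, hestar, hex, hey⟩ := rudin_sep hX hA hxy hf hfxy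
    refine ⟨(e : X → ℂ), ⟨e, ⟨heA, by rw [hestar]; exact heA⟩, rfl⟩, ?_⟩
    rw [hex, hey]
    exact one_ne_zero
  have hdense := ContinuousMap.starSubalgebra_topologicalClosure_eq_top_of_separatesPoints SA hSAsep
  rw [eq_top_iff]
  intro f _
  have h1 : f ∈ SA.topologicalClosure := by rw [hdense]; trivial
  have h2 : f ∈ closure (SA : Set C(X, ℂ)) := h1
  have h3 : (SA : Set C(X, ℂ)) ⊆ (A : Set C(X, ℂ)) := fun g hg => hg.1
  have h4 : f ∈ closure (A : Set C(X, ℂ)) := closure_mono h3 h2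
  rwa [hA.closure_eq] at h4
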